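/- arXiv:2107.11270 — 2 statements merged into one kernel-verified Lean document; each statement's English description precedes it below -/
import Mathlib

section
/- Let Θ ⊆ ℝᵐ be compact and (f_θ)_{θ∈Θ} a family of functions f_θ : [−π,π] → ℝ with δ ≤ f_θ(λ) ≤ Γ for all θ, λ and some 0 < δ ≤ Γ < ∞, such that λ ↦ f_θ(λ) is Lipschitz with constant L uniformly in θ ∈ Θ. Let f : [−π,π] → [0,F] be Lipschitz with constant L. Then there is a constant C depending only on δ, Γ, L, F such that for every n ≥ 2 and every bounded g : [−π,π] → ℝ: sup_{θ∈Θ} |Dₙ(θ,g) − D(θ,f)| ≤ C ( 1/n + sup_{λ∈[−π,π]} |g(λ) − f(λ)| ). -/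
open Real MeasureTheory

lemma log_lip {δ a b : ℝ} (hδ : 0 < δ) (ha : δ ≤ a) (hb : δ ≤ b) :
    |Real.log a - Real.log b| ≤ |a - b| / δ := by
  have key : ∀ u v : ℝ, δ ≤ u → δ ≤ v → v ≤ u → Real.log u - Real.log v ≤ (u - v) / δ := by
    intro u v hu hv huv
    have hv0 : 0 < v := lt_of_lt_of_le hδ hv
    have hu0 : 0 < u := lt_of_lt_of_le hδ hu
    have h1 : Real.log u - Real.log v = Real.log (u / v) := by
      rw [Real.log_div (ne_of_gt hu0) (ne_of_gt hv0)]
    rw [h1]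
    have h2 : Real.log (u / v) ≤ u / v - 1 :=
      Real.log_le_sub_one_of_pos (by positivity)
    have h3 : u / v - 1 = (u - v) / v := by field_simp
    have h4 : (u - v) / v ≤ (u - v) / δ :=
      div_le_div_of_nonneg_left (by linarith) hδ hv
    linarith
  rcases le_total b a with h | h
  · have hlog : Real.log b ≤ Real.log a := Real.log_le_log (by linarith) h
    rw [abs_of_nonneg (show (0:ℝ) ≤ Real.log a - Real.log b by linarith),
      abs_of_nonneg (show (0:ℝ) ≤ a - b by linarith)]
    exact key a b ha hb h
  · have hlog : Real.log a ≤ Real.log b := Real.log_le_log (by linarith) h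
    rw [abs_of_nonpos (show Real.log a - Real.log b ≤ 0 by linarith),
      abs_of_nonpos (show a - b ≤ 0 by linarith)]
    have := key b a hb ha h
    rw [neg_sub, neg_sub]
    linarith

lemma cell_bound {h : ℝ → ℝ} {a b c K : ℝ} (hab : a ≤ b) (hK : 0 ≤ K)
    (hc : c ∈ Set.Icc a b) (hcont : ContinuousOn h (Set.Icc a b))
    (hlip : ∀ x ∈ Set.Icc a b, |h x - h c| ≤ K * (b - a)) :
    |(∫ t in a..b, h t) - (b - a) * h c| ≤ K * (b - a)^2 := by
  have hInt : IntervalIntegrable h volume a b := by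
    apply ContinuousOn.intervalIntegrable
    rwa [Set.uIcc_of_le hab]
  have hIntC : IntervalIntegrable (fun _ => h c) volume a b :=
    intervalIntegrable_const
  have heq : (∫ t in a..b, h t) - (b - a) * h c = ∫ t in a..b, (h t - h c) := by
    rw [intervalIntegral.integral_sub hInt hIntC, intervalIntegral.integral_const]
    simp [smul_eq_mul]
  rw [heq]
  have := intervalIntegral.norm_integral_le_of_norm_le_const
    (C := K * (b - a)) (f := fun t => h t - h c) (a := a) (b := b) ?_
  · calc |∫ t in a..b, (h t - h c)| ≤ K * (b - a) * |b - a| := this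
    _ = K * (b - a)^2 := by rw [abs_of_nonneg (by linarith)]; ring
  · intro x hx
    rw [Set.uIoc_of_le hab] at hx
    exact hlip x ⟨le_of_lt hx.1, hx.2⟩

lemma sum_symm (m : ℕ) (F : ℤ → ℝ) :
    ∑ j ∈ (Finset.Icc (-(m:ℤ)) m).erase 0, F j
      = ∑ i ∈ Finset.range m, (F (i+1) + F (-(i+1))) := by
  have hsplit : (Finset.Icc (-(m:ℤ)) m).erase 0
      = Finset.Icc (1:ℤ) m ∪ (Finset.Icc (1:ℤ) m).image (fun j => -j) := by
    ext j
    simp only [Finset.mem_erase, Finset.mem_Icc, Finset.mem_union, Finset.mem_image]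
    constructor
    · rintro ⟨h0, h1, h2⟩
      rcases lt_or_gt_of_ne h0 with h | h
      · right; exact ⟨-j, ⟨by omega, by omega⟩, by omega⟩
      · left; omega
    · rintro (⟨h1, h2⟩ | ⟨k, ⟨hk1, hk2⟩, rfl⟩) <;> omega
  have hdisj : Disjoint (Finset.Icc (1:ℤ) m) ((Finset.Icc (1:ℤ) m).image (fun j => -j)) := by
    rw [Finset.disjoint_left]
    rintro j hj hj'
    simp only [Finset.mem_Icc] at hj
    simp only [Finset.mem_image, Finset.mem_Icc] at hj'
    omega
  rw [hsplit, Finset.sum_union hdisj,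
    Finset.sum_image (by intro x hx y hy hxy; simpa using hxy)]
  rw [Finset.sum_add_distrib]
  congr 1
  · rw [show Finset.Icc (1:ℤ) m = Finset.map ⟨fun i : ℕ => (i:ℤ)+1, by intro x y hxy; simp at hxy; omega⟩ (Finset.range m) from ?_,
      Finset.sum_map]
    · rfl
    · ext j; simp [Finset.mem_map, Finset.mem_range]; constructor
      · rintro ⟨h1, h2⟩; exact ⟨(j-1).toNat, by omega, by show ((j-1).toNat : ℤ) + 1 = j; omega⟩
      · rintro ⟨k, hk, rfl⟩; show 1 ≤ (k:ℤ)+1 ∧ (k:ℤ)+1 ≤ (m:ℤ); omega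
  · rw [show Finset.Icc (1:ℤ) m = Finset.map ⟨fun i : ℕ => (i:ℤ)+1, by intro x y hxy; simp at hxy; omega⟩ (Finset.range m) from ?_,
      Finset.sum_map]
    · rfl
    · ext j; simp [Finset.mem_map, Finset.mem_range]; constructor
      · rintro ⟨h1, h2⟩; exact ⟨(j-1).toNat, by omega, by show ((j-1).toNat : ℤ) + 1 = j; omega⟩
      · rintro ⟨k, hk, rfl⟩; show 1 ≤ (k:ℤ)+1 ∧ (k:ℤ)+1 ≤ (m:ℤ); omega

/-- The discrete Whittle contrast. -/
noncomputable def whittleDisc {Θ : Type*} (f : Θ → ℝ → ℝ) (n : ℕ) (g : ℝ → ℝ) (θ : Θ) : ℝ :=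
  (1 / (n : ℝ)) * ∑ j ∈ (Finset.Icc (-((n / 2 : ℕ) : ℤ)) ((n / 2 : ℕ) : ℤ)).erase 0,
    (Real.log (f θ (2 * π * (j : ℝ) / (n : ℝ))) +
      g (2 * π * (j : ℝ) / (n : ℝ)) / f θ (2 * π * (j : ℝ) / (n : ℝ)))

/-- The integrated Whittle contrast. -/
noncomputable def whittleCont {Θ : Type*} (f : Θ → ℝ → ℝ) (g : ℝ → ℝ) (θ : Θ) : ℝ :=
  (1 / (2 * π)) * ∫ x in (-π)..π, (Real.log (f θ x) + g x / f θ x)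

set_option maxHeartbeats 1000000 in
/-- Composite uniform approximation bound: a constant `C` depending only on
`δ, Γ, L, F` such that `sup_θ |Dₙ(θ,g) − D(θ,f₀)| ≤ C (1/n + sup_λ |g(λ) − f₀(λ)|)`. -/
theorem stmt_3 (δ Γ L F : ℝ) (hδ : 0 < δ) (hΓ : δ ≤ Γ) (hL : 0 ≤ L) (hF : 0 ≤ F) :
    ∃ C : ℝ, 0 < C ∧
      ∀ (m : ℕ) (Θ : Set (EuclideanSpace ℝ (Fin m))), IsCompact Θ →
      ∀ f : EuclideanSpace ℝ (Fin m) → ℝ → ℝ,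
        (∀ θ ∈ Θ, ∀ x ∈ Set.Icc (-π) π, δ ≤ f θ x ∧ f θ x ≤ Γ) →
        (∀ θ ∈ Θ, ∀ x ∈ Set.Icc (-π) π, ∀ y ∈ Set.Icc (-π) π,
          |f θ x - f θ y| ≤ L * |x - y|) →
      ∀ f₀ : ℝ → ℝ,
        (∀ x ∈ Set.Icc (-π) π, 0 ≤ f₀ x ∧ f₀ x ≤ F) →
        (∀ x ∈ Set.Icc (-π) π, ∀ y ∈ Set.Icc (-π) π, |f₀ x - f₀ y| ≤ L * |x - y|) →
      ∀ n : ℕ, 2 ≤ n →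
      ∀ g : ℝ → ℝ, (∃ M, ∀ x, |g x| ≤ M) →
      ∀ θ ∈ Θ,
        |whittleDisc f n g θ - whittleCont f f₀ θ| ≤
          C * (1 / (n : ℝ) + ⨆ x : Set.Icc (-π) π, |g x.1 - f₀ x.1|) := by
  have hπ : (0:ℝ) < π := Real.pi_pos
  set K : ℝ := 2*L/δ + F*L/δ^2 with hKdef
  set B : ℝ := |Real.log δ| + |Real.log Γ| + F/δ with hBdef
  have hK0 : 0 ≤ K := by positivity
  have hB0 : 0 ≤ B := by positivity
  refine ⟨1/δ + B + 2*π*K, by positivity, ?_⟩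
  intro mdim Θ hΘ f hf hfLip f₀ hf₀ hf₀Lip n hn g hg θ hθ
  obtain ⟨M, hM⟩ := hg
  set m : ℕ := n / 2 with hmdef
  have hn0 : (0:ℝ) < n := by positivity
  have h2m : 2 * m ≤ n := by omega
  have h2m1 : n ≤ 2 * m + 1 := by omega
  have hm1 : 1 ≤ m := by omega
  have hmR : (m:ℝ) ≤ (n:ℝ)/2 := by
    have : ((2*m : ℕ):ℝ) ≤ (n:ℝ) := Nat.cast_le.2 h2m
    push_cast at this; linarith
  -- the grid function
  set a : ℕ → ℝ := fun i => 2*π*(i:ℝ)/(n:ℝ) with hadef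
  have ha_mono : ∀ i j : ℕ, i ≤ j → a i ≤ a j := by
    intro i j hij
    have : (i:ℝ) ≤ (j:ℝ) := Nat.cast_le.2 hij
    simp only [hadef]
    gcongr
  have ham_le : a m ≤ π := by
    simp only [hadef]
    rw [div_le_iff₀ hn0]
    nlinarith
  have ha_nonneg : ∀ i, 0 ≤ a i := by
    intro i; simp only [hadef]; positivity
  have ha_mem : ∀ i, i ≤ m → a i ∈ Set.Icc (-π) π := by
    intro i hi
    constructor
    · linarith [ha_nonneg i]
    · exact (ha_mono i m hi).trans ham_le
  have ha_neg_mem : ∀ i, i ≤ m → -a i ∈ Set.Icc (-π) π := by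
    intro i hi
    constructor
    · have := (ha_mono i m hi).trans ham_le; linarith
    · linarith [ha_nonneg i]
  have hgap : π - a m ≤ π/(n:ℝ) := by
    have hcast : (n:ℝ) ≤ ((2*m+1 : ℕ):ℝ) := Nat.cast_le.2 h2m1
    push_cast at hcast
    simp only [hadef]
    rw [sub_le_iff_le_add, ← add_div, le_div_iff₀ hn0]
    nlinarith
  have hstep : ∀ i, a (i+1) - a i = 2*π/(n:ℝ) := by
    intro i; simp only [hadef]; push_cast; ring
  -- the integrand with f₀
  set h : ℝ → ℝ := fun x => Real.log (f θ x) + f₀ x / f θ x with hhdef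
  have hfθ : ∀ x ∈ Set.Icc (-π) π, δ ≤ f θ x ∧ f θ x ≤ Γ := hf θ hθ
  -- Lipschitz bound for h
  have hlip : ∀ x ∈ Set.Icc (-π) π, ∀ y ∈ Set.Icc (-π) π, |h x - h y| ≤ K * |x - y| := by
    intro x hx y hy
    obtain ⟨hδx, hΓx⟩ := hfθ x hx
    obtain ⟨hδy, hΓy⟩ := hfθ y hy
    obtain ⟨h0x, hFx⟩ := hf₀ x hx
    obtain ⟨h0y, hFy⟩ := hf₀ y hy
    have hfx0 : (0:ℝ) < f θ x := lt_of_lt_of_le hδ hδx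
    have hfy0 : (0:ℝ) < f θ y := lt_of_lt_of_le hδ hδy
    have hL1 : |Real.log (f θ x) - Real.log (f θ y)| ≤ (L * |x-y|) / δ := by
      refine (log_lip hδ hδx hδy).trans ?_
      gcongr
      exact hfLip θ hθ x hx y hy
    have hq : f₀ x / f θ x - f₀ y / f θ y
        = (f₀ x - f₀ y) / f θ x + f₀ y * (f θ y - f θ x) / (f θ x * f θ y) := by
      field_simp; ring
    have hq1 : |(f₀ x - f₀ y) / f θ x| ≤ (L * |x-y|) / δ := by
      rw [abs_div, abs_of_pos hfx0]
      exact div_le_div₀ (by positivity) (hf₀Lip x hx y hy) hδ hδx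
    have hq2 : |f₀ y * (f θ y - f θ x) / (f θ x * f θ y)| ≤ F * (L * |x-y|) / δ^2 := by
      rw [abs_div, abs_mul, abs_of_pos (mul_pos hfx0 hfy0), abs_of_nonneg h0y]
      apply div_le_div₀ (by positivity) _ (by positivity) _
      · have h1 : |f θ y - f θ x| ≤ L * |x - y| := by
          rw [abs_sub_comm x y]; exact hfLip θ hθ y hy x hx
        exact mul_le_mul hFy h1 (abs_nonneg _) hF
      · nlinarith
    have htri : |h x - h y| ≤ |Real.log (f θ x) - Real.log (f θ y)|
        + (|(f₀ x - f₀ y) / f θ x| + |f₀ y * (f θ y - f θ x) / (f θ x * f θ y)|) := by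
      simp only [hhdef]
      calc |Real.log (f θ x) + f₀ x / f θ x - (Real.log (f θ y) + f₀ y / f θ y)|
          = |(Real.log (f θ x) - Real.log (f θ y)) + ((f₀ x - f₀ y) / f θ x + f₀ y * (f θ y - f θ x) / (f θ x * f θ y))| := by
            rw [← hq]; ring_nf
        _ ≤ _ := (abs_add_le _ _).trans (by gcongr; exact abs_add_le _ _)
    have hδ2 : (0:ℝ) < δ^2 := by positivity
    calc |h x - h y| ≤ (L * |x-y|)/δ + ((L * |x-y|)/δ + F * (L * |x-y|)/δ^2) := by
          linarith
      _ = K * |x - y| := by rw [hKdef]; field_simp; ring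
  -- pointwise bound for h
  have hBnd : ∀ x ∈ Set.Icc (-π) π, |h x| ≤ B := by
    intro x hx
    obtain ⟨hδx, hΓx⟩ := hfθ x hx
    obtain ⟨h0x, hFx⟩ := hf₀ x hx
    have hfx0 : (0:ℝ) < f θ x := lt_of_lt_of_le hδ hδx
    have hlog : |Real.log (f θ x)| ≤ |Real.log δ| + |Real.log Γ| := by
      rw [abs_le]
      constructor
      · have h1 : Real.log δ ≤ Real.log (f θ x) := Real.log_le_log hδ hδx
        have h2 : -|Real.log δ| ≤ Real.log δ := neg_abs_le _
        have h3 : (0:ℝ) ≤ |Real.log Γ| := abs_nonneg _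
        linarith
      · have h1 : Real.log (f θ x) ≤ Real.log Γ := Real.log_le_log hfx0 hΓx
        have h2 : Real.log Γ ≤ |Real.log Γ| := le_abs_self _
        have h3 : (0:ℝ) ≤ |Real.log δ| := abs_nonneg _
        linarith
    have hquo : |f₀ x / f θ x| ≤ F / δ := by
      rw [abs_div, abs_of_pos hfx0, abs_of_nonneg h0x]
      exact div_le_div₀ hF hFx hδ hδx
    calc |h x| ≤ |Real.log (f θ x)| + |f₀ x / f θ x| := abs_add_le _ _
      _ ≤ B := by rw [hBdef]; linarith
  -- continuity of h on Icc
  have hcont : ContinuousOn h (Set.Icc (-π) π) := by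
    have : LipschitzOnWith (Real.toNNReal K) h (Set.Icc (-π) π) := by
      rw [lipschitzOnWith_iff_dist_le_mul]
      intro x hx y hy
      rw [Real.dist_eq, Real.dist_eq, Real.coe_toNNReal K hK0]
      exact hlip x hx y hy
    exact this.continuousOn
  have hIntOn : ∀ u v : ℝ, u ∈ Set.Icc (-π) π → v ∈ Set.Icc (-π) π →
      IntervalIntegrable h volume u v := by
    intro u v hu hv
    exact (hcont.mono (Set.uIcc_subset_Icc hu hv)).intervalIntegrable
  -- the sup S
  set S : ℝ := ⨆ x : Set.Icc (-π) π, |g x.1 - f₀ x.1| with hSdef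
  have hbdd : BddAbove (Set.range fun x : Set.Icc (-π) π => |g x.1 - f₀ x.1|) := by
    refine ⟨M + F, ?_⟩
    rintro _ ⟨x, rfl⟩
    have h1 := hM x.1
    obtain ⟨h2, h3⟩ := hf₀ x.1 x.2
    have h4 : |f₀ x.1| ≤ F := by rw [abs_of_nonneg h2]; exact h3
    calc |g x.1 - f₀ x.1| ≤ |g x.1| + |f₀ x.1| := abs_sub _ _
      _ ≤ M + F := by linarith
  have hS0 : 0 ≤ S := Real.iSup_nonneg (fun x => abs_nonneg _)
  have hSle : ∀ x ∈ Set.Icc (-π) π, |g x - f₀ x| ≤ S :=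
    fun x hx => le_ciSup hbdd ⟨x, hx⟩
  -- grid points are inside [-π, π]
  have hG : ∀ j : ℤ, j ∈ (Finset.Icc (-(m:ℤ)) m).erase 0 →
      (2*π*(j:ℝ)/(n:ℝ)) ∈ Set.Icc (-π) π := by
    intro j hj
    simp only [Finset.mem_erase, Finset.mem_Icc] at hj
    have h1 : |(j:ℝ)| ≤ (m:ℝ) := by
      have h2 : |j| ≤ (m:ℤ) := abs_le.2 ⟨hj.2.1, hj.2.2⟩
      rw [← Int.cast_abs]
      exact_mod_cast h2
    have h2 : |2*π*(j:ℝ)/(n:ℝ)| ≤ π := by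
      rw [abs_div, abs_of_pos hn0, abs_mul, abs_of_pos (by positivity : (0:ℝ) < 2*π),
        div_le_iff₀ hn0]
      have e1 := mul_le_mul_of_nonneg_left h1 (by positivity : (0:ℝ) ≤ 2*π)
      have e2 := mul_le_mul_of_nonneg_left hmR (by positivity : (0:ℝ) ≤ 2*π)
      linarith
    exact Set.mem_Icc.2 (abs_le.1 h2)
  -- Step 1 : replacing g by f₀ in the discrete contrast
  have hstep1 : |whittleDisc f n g θ - whittleDisc f n f₀ θ| ≤ S/δ := by
    have hdiff : whittleDisc f n g θ - whittleDisc f n f₀ θ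
        = (1/(n:ℝ)) * ∑ j ∈ (Finset.Icc (-(m:ℤ)) m).erase 0,
            ((g (2*π*(j:ℝ)/(n:ℝ)) - f₀ (2*π*(j:ℝ)/(n:ℝ))) / f θ (2*π*(j:ℝ)/(n:ℝ))) := by
      simp only [whittleDisc]
      rw [← mul_sub, ← Finset.sum_sub_distrib]
      congr 1
      apply Finset.sum_congr rfl
      intro j hj
      ring
    have hcard : ((Finset.Icc (-(m:ℤ)) m).erase 0).card = 2*m := by
      rw [Finset.card_erase_of_mem (by simp only [Finset.mem_Icc]; omega), Int.card_Icc]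
      omega
    have hterm : ∀ j ∈ (Finset.Icc (-(m:ℤ)) m).erase 0,
        |(g (2*π*(j:ℝ)/(n:ℝ)) - f₀ (2*π*(j:ℝ)/(n:ℝ))) / f θ (2*π*(j:ℝ)/(n:ℝ))| ≤ S/δ := by
      intro j hj
      have hx := hG j hj
      obtain ⟨hδx, _⟩ := hfθ _ hx
      have hfx0 : (0:ℝ) < f θ (2*π*(j:ℝ)/(n:ℝ)) := lt_of_lt_of_le hδ hδx
      rw [abs_div, abs_of_pos hfx0]
      exact div_le_div₀ hS0 (hSle _ hx) hδ hδx
    rw [hdiff, abs_mul, abs_of_pos (by positivity : (0:ℝ) < 1/(n:ℝ))]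
    calc (1/(n:ℝ)) * |∑ j ∈ (Finset.Icc (-(m:ℤ)) m).erase 0,
            ((g (2*π*(j:ℝ)/(n:ℝ)) - f₀ (2*π*(j:ℝ)/(n:ℝ))) / f θ (2*π*(j:ℝ)/(n:ℝ)))|
        ≤ (1/(n:ℝ)) * (((2*m : ℕ):ℝ) * (S/δ)) := by
          gcongr
          refine (Finset.abs_sum_le_sum_abs _ _).trans ?_
          refine (Finset.sum_le_card_nsmul _ _ _ hterm).trans_eq ?_
          rw [hcard]; simp [nsmul_eq_mul]
      _ ≤ (1/(n:ℝ)) * ((n:ℝ) * (S/δ)) := by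
          gcongr
      _ = S/δ := by field_simp
  -- Step 2 : Riemann-sum approximation for the contrast with f₀
  have hdisc₀ : whittleDisc f n f₀ θ
      = (1/(n:ℝ)) * ∑ i ∈ Finset.range m, (h (a (i+1)) + h (-(a (i+1)))) := by
    simp only [whittleDisc, ← hmdef]
    rw [sum_symm m (fun j : ℤ => Real.log (f θ (2*π*(j:ℝ)/(n:ℝ)))
        + f₀ (2*π*(j:ℝ)/(n:ℝ)) / f θ (2*π*(j:ℝ)/(n:ℝ)))]
    congr 1
    apply Finset.sum_congr rfl
    intro i _
    have e1 : 2*π*((((i:ℤ)+1 : ℤ)):ℝ)/(n:ℝ) = a (i+1) := by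
      simp only [hadef]; push_cast; ring
    have e2 : 2*π*(((-((i:ℤ)+1) : ℤ)):ℝ)/(n:ℝ) = -(a (i+1)) := by
      simp only [hadef]; push_cast; ring
    simp only [e1, e2, hhdef]
  have hInt1 : ∀ i < m, IntervalIntegrable h volume (a i) (a (i+1)) :=
    fun i hi => hIntOn _ _ (ha_mem i (by omega)) (ha_mem (i+1) (by omega))
  have hInt2 : ∀ i < m, IntervalIntegrable h volume (-(a i)) (-(a (i+1))) :=
    fun i hi => hIntOn _ _ (ha_neg_mem i (by omega)) (ha_neg_mem (i+1) (by omega))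
  have ha0 : a 0 = 0 := by simp [hadef]
  have hposSum : ∑ i ∈ Finset.range m, ∫ x in a i..a (i+1), h x
      = ∫ x in (0:ℝ)..a m, h x := by
    have := intervalIntegral.sum_integral_adjacent_intervals (a := a) (n := m) hInt1
    rwa [ha0] at this
  have hnegSum : ∑ i ∈ Finset.range m, ∫ x in (-(a i))..(-(a (i+1))), h x
      = ∫ x in (0:ℝ)..(-(a m)), h x := by
    have := intervalIntegral.sum_integral_adjacent_intervals
      (a := fun i => -(a i)) (n := m) hInt2
    simp only [ha0, neg_zero] at this
    exact this
  have hContDef : whittleCont f f₀ θ = (1/(2*π)) * ∫ x in (-π)..π, h x := rfl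
  have hneg_pi : (-π) ∈ Set.Icc (-π) π := by constructor <;> linarith
  have hpi : π ∈ Set.Icc (-π) π := by constructor <;> linarith
  have h0mem : (0:ℝ) ∈ Set.Icc (-π) π := by constructor <;> linarith
  have hamm := ha_mem m le_rfl
  have hnamm := ha_neg_mem m le_rfl
  have hsplit : ∫ x in (-π)..π, h x
      = (∫ x in (-π)..(-(a m)), h x) + (∫ x in (-(a m))..(0:ℝ), h x)
        + (∫ x in (0:ℝ)..(a m), h x) + (∫ x in (a m)..π, h x) := by
    have e1 : (∫ x in (-π)..(-(a m)), h x) + (∫ x in (-(a m))..(0:ℝ), h x)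
        = ∫ x in (-π)..(0:ℝ), h x :=
      intervalIntegral.integral_add_adjacent_intervals
        (hIntOn _ _ hneg_pi hnamm) (hIntOn _ _ hnamm h0mem)
    have e2 : (∫ x in (0:ℝ)..(a m), h x) + (∫ x in (a m)..π, h x)
        = ∫ x in (0:ℝ)..π, h x :=
      intervalIntegral.integral_add_adjacent_intervals
        (hIntOn _ _ h0mem hamm) (hIntOn _ _ hamm hpi)
    have e3 : (∫ x in (-π)..(0:ℝ), h x) + (∫ x in (0:ℝ)..π, h x)
        = ∫ x in (-π)..π, h x :=
      intervalIntegral.integral_add_adjacent_intervals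
        (hIntOn _ _ hneg_pi h0mem) (hIntOn _ _ h0mem hpi)
    linarith
  have hmid : ∑ i ∈ Finset.range m, ∫ x in (-(a (i+1)))..(-(a i)), h x
      = ∫ x in (-(a m))..(0:ℝ), h x := by
    calc ∑ i ∈ Finset.range m, ∫ x in (-(a (i+1)))..(-(a i)), h x
        = ∑ i ∈ Finset.range m, -(∫ x in (-(a i))..(-(a (i+1))), h x) :=
          Finset.sum_congr rfl (fun i _ => intervalIntegral.integral_symm _ _)
      _ = -(∫ x in (0:ℝ)..(-(a m)), h x) := by
          rw [← hnegSum, Finset.sum_neg_distrib]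
      _ = ∫ x in (-(a m))..(0:ℝ), h x := (intervalIntegral.integral_symm _ _).symm
  -- cell estimates
  have hcell1 : ∀ i ∈ Finset.range m,
      |(1/(n:ℝ)) * h (a (i+1)) - (1/(2*π)) * ∫ x in a i..a (i+1), h x|
        ≤ (2*π*K)/(n:ℝ)^2 := by
    intro i hi
    simp only [Finset.mem_range] at hi
    have hab : a i ≤ a (i+1) := ha_mono i (i+1) (by omega)
    have hsub : Set.Icc (a i) (a (i+1)) ⊆ Set.Icc (-π) π :=
      Set.Icc_subset_Icc (ha_mem i (by omega)).1 (ha_mem (i+1) (by omega)).2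
    have hc : a (i+1) ∈ Set.Icc (a i) (a (i+1)) := ⟨hab, le_refl _⟩
    have hcb := cell_bound hab hK0 hc (hcont.mono hsub) (fun x hx => by
      refine (hlip x (hsub hx) _ (hsub hc)).trans ?_
      have hxd : |x - a (i+1)| ≤ a (i+1) - a i := by
        rw [abs_le]; exact ⟨by linarith [hx.1, hx.2], by linarith [hx.1, hx.2]⟩
      exact mul_le_mul_of_nonneg_left hxd hK0)
    have hba : a (i+1) - a i = 2*π/(n:ℝ) := hstep i
    have e : (1/(n:ℝ)) * h (a (i+1)) - (1/(2*π)) * ∫ x in a i..a (i+1), h x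
        = -((1/(2*π)) * ((∫ x in a i..a (i+1), h x) - (a (i+1) - a i) * h (a (i+1)))) := by
      rw [hba]; field_simp; ring
    rw [e, abs_neg, abs_mul, abs_of_pos (by positivity : (0:ℝ) < 1/(2*π))]
    calc (1/(2*π)) * |(∫ x in a i..a (i+1), h x) - (a (i+1) - a i) * h (a (i+1))|
        ≤ (1/(2*π)) * (K * (a (i+1) - a i)^2) := by gcongr
      _ = (2*π*K)/(n:ℝ)^2 := by rw [hba]; field_simp
  have hcell2 : ∀ i ∈ Finset.range m,
      |(1/(n:ℝ)) * h (-(a (i+1))) - (1/(2*π)) * ∫ x in (-(a (i+1)))..(-(a i)), h x|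
        ≤ (2*π*K)/(n:ℝ)^2 := by
    intro i hi
    simp only [Finset.mem_range] at hi
    have hab : -(a (i+1)) ≤ -(a i) := by
      have := ha_mono i (i+1) (by omega); linarith
    have hsub : Set.Icc (-(a (i+1))) (-(a i)) ⊆ Set.Icc (-π) π :=
      Set.Icc_subset_Icc (ha_neg_mem (i+1) (by omega)).1 (ha_neg_mem i (by omega)).2
    have hc : -(a (i+1)) ∈ Set.Icc (-(a (i+1))) (-(a i)) := ⟨le_refl _, hab⟩
    have hcb := cell_bound hab hK0 hc (hcont.mono hsub) (fun x hx => by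
      refine (hlip x (hsub hx) _ (hsub hc)).trans ?_
      have hxd : |x - -(a (i+1))| ≤ -(a i) - -(a (i+1)) := by
        rw [abs_le]; exact ⟨by linarith [hx.1, hx.2], by linarith [hx.1, hx.2]⟩
      exact mul_le_mul_of_nonneg_left hxd hK0)
    have hba : -(a i) - -(a (i+1)) = 2*π/(n:ℝ) := by
      have := hstep i; linarith
    have e : (1/(n:ℝ)) * h (-(a (i+1))) - (1/(2*π)) * ∫ x in (-(a (i+1)))..(-(a i)), h x
        = -((1/(2*π)) * ((∫ x in (-(a (i+1)))..(-(a i)), h x)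
            - (-(a i) - -(a (i+1))) * h (-(a (i+1))))) := by
      rw [hba]; field_simp; ring
    rw [e, abs_neg, abs_mul, abs_of_pos (by positivity : (0:ℝ) < 1/(2*π))]
    calc (1/(2*π)) * |(∫ x in (-(a (i+1)))..(-(a i)), h x)
            - (-(a i) - -(a (i+1))) * h (-(a (i+1)))|
        ≤ (1/(2*π)) * (K * (-(a i) - -(a (i+1)))^2) := by gcongr
      _ = (2*π*K)/(n:ℝ)^2 := by rw [hba]; field_simp
  -- boundary estimates
  have hbound1 : |∫ x in (-π)..(-(a m)), h x| ≤ B * (π/(n:ℝ)) := by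
    have hle : -π ≤ -(a m) := by linarith [ham_le]
    have := intervalIntegral.norm_integral_le_of_norm_le_const (C := B)
      (f := h) (a := -π) (b := -(a m)) (fun x hx => by
        rw [Set.uIoc_of_le hle] at hx
        exact hBnd x ⟨le_of_lt hx.1, le_trans hx.2 hnamm.2⟩)
    refine this.trans ?_
    rw [abs_of_nonneg (by linarith)]
    have : -(a m) - -π ≤ π/(n:ℝ) := by
      have := hgap; linarith
    gcongr
  have hbound2 : |∫ x in (a m)..π, h x| ≤ B * (π/(n:ℝ)) := by
    have hle : a m ≤ π := ham_le
    have := intervalIntegral.norm_integral_le_of_norm_le_const (C := B)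
      (f := h) (a := a m) (b := π) (fun x hx => by
        rw [Set.uIoc_of_le hle] at hx
        exact hBnd x ⟨le_trans hamm.1 (le_of_lt hx.1), hx.2⟩)
    refine this.trans ?_
    rw [abs_of_nonneg (by linarith)]
    gcongr
  -- assembling step 2
  have hstep2 : |whittleDisc f n f₀ θ - whittleCont f f₀ θ| ≤ (B + 2*π*K)/(n:ℝ) := by
    have hE : whittleDisc f n f₀ θ - whittleCont f f₀ θ
        = (∑ i ∈ Finset.range m,
            ((1/(n:ℝ)) * h (a (i+1)) - (1/(2*π)) * ∫ x in a i..a (i+1), h x))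
          + (∑ i ∈ Finset.range m,
            ((1/(n:ℝ)) * h (-(a (i+1))) - (1/(2*π)) * ∫ x in (-(a (i+1)))..(-(a i)), h x))
          - (1/(2*π)) * (∫ x in (-π)..(-(a m)), h x)
          - (1/(2*π)) * (∫ x in (a m)..π, h x) := by
      rw [hdisc₀, hContDef, hsplit, Finset.sum_add_distrib, Finset.sum_sub_distrib,
        Finset.sum_sub_distrib, ← Finset.mul_sum, ← Finset.mul_sum, ← Finset.mul_sum,
        ← Finset.mul_sum, hposSum, hmid]
      ring
    have tri : ∀ p q r s : ℝ, |p + q - r - s| ≤ |p| + |q| + |r| + |s| := by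
      intro p q r s
      calc |p + q - r - s| ≤ |p + q - r| + |s| := abs_sub _ _
        _ ≤ (|p + q| + |r|) + |s| := by gcongr; exact abs_sub _ _
        _ ≤ ((|p| + |q|) + |r|) + |s| := by gcongr; exact abs_add_le _ _
        _ = _ := by ring
    rw [hE]
    refine (tri _ _ _ _).trans ?_
    have t1 : |∑ i ∈ Finset.range m,
        ((1/(n:ℝ)) * h (a (i+1)) - (1/(2*π)) * ∫ x in a i..a (i+1), h x)|
        ≤ (m:ℝ) * ((2*π*K)/(n:ℝ)^2) := by
      refine (Finset.abs_sum_le_sum_abs _ _).trans ?_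
      refine (Finset.sum_le_card_nsmul _ _ _ hcell1).trans_eq ?_
      simp [nsmul_eq_mul, Finset.card_range]
    have t2 : |∑ i ∈ Finset.range m,
        ((1/(n:ℝ)) * h (-(a (i+1))) - (1/(2*π)) * ∫ x in (-(a (i+1)))..(-(a i)), h x)|
        ≤ (m:ℝ) * ((2*π*K)/(n:ℝ)^2) := by
      refine (Finset.abs_sum_le_sum_abs _ _).trans ?_
      refine (Finset.sum_le_card_nsmul _ _ _ hcell2).trans_eq ?_
      simp [nsmul_eq_mul, Finset.card_range]
    have tb1 : |(1/(2*π)) * (∫ x in (-π)..(-(a m)), h x)| ≤ B/(2*(n:ℝ)) := by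
      rw [abs_mul, abs_of_pos (by positivity : (0:ℝ) < 1/(2*π))]
      calc (1/(2*π)) * |∫ x in (-π)..(-(a m)), h x| ≤ (1/(2*π)) * (B * (π/(n:ℝ))) := by
            gcongr
        _ = B/(2*(n:ℝ)) := by field_simp
    have tb2 : |(1/(2*π)) * (∫ x in (a m)..π, h x)| ≤ B/(2*(n:ℝ)) := by
      rw [abs_mul, abs_of_pos (by positivity : (0:ℝ) < 1/(2*π))]
      calc (1/(2*π)) * |∫ x in (a m)..π, h x| ≤ (1/(2*π)) * (B * (π/(n:ℝ))) := by
            gcongr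
        _ = B/(2*(n:ℝ)) := by field_simp
    have harith : (m:ℝ) * ((2*π*K)/(n:ℝ)^2) ≤ (π*K)/(n:ℝ) := by
      have h1 : (m:ℝ) * ((2*π*K)/(n:ℝ)^2) ≤ ((n:ℝ)/2) * ((2*π*K)/(n:ℝ)^2) := by
        gcongr
      have h2 : ((n:ℝ)/2) * ((2*π*K)/(n:ℝ)^2) = (π*K)/(n:ℝ) := by
        field_simp
      linarith
    have hfin : (π*K)/(n:ℝ) + (π*K)/(n:ℝ) + B/(2*(n:ℝ)) + B/(2*(n:ℝ))
        = (B + 2*π*K)/(n:ℝ) := by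
      field_simp; ring
    linarith
  -- conclusion
  calc |whittleDisc f n g θ - whittleCont f f₀ θ|
      ≤ |whittleDisc f n g θ - whittleDisc f n f₀ θ|
        + |whittleDisc f n f₀ θ - whittleCont f f₀ θ| := by
        rw [show whittleDisc f n g θ - whittleCont f f₀ θ
          = (whittleDisc f n g θ - whittleDisc f n f₀ θ)
            + (whittleDisc f n f₀ θ - whittleCont f f₀ θ) by ring]
        exact abs_add_le _ _
    _ ≤ S/δ + (B + 2*π*K)/(n:ℝ) := add_le_add hstep1 hstep2
    _ ≤ (1/δ + B + 2*π*K) * (1/(n:ℝ) + S) := by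
        have hexp : (1/δ + B + 2*π*K) * (1/(n:ℝ) + S)
            = (1/δ)*(1/(n:ℝ)) + S/δ + (B + 2*π*K)/(n:ℝ) + (B + 2*π*K)*S := by
          field_simp; ring
        have h1 : (0:ℝ) ≤ (1/δ)*(1/(n:ℝ)) := by positivity
        have h2 : (0:ℝ) ≤ (B + 2*π*K)*S := mul_nonneg (by positivity) hS0
        rw [hexp]
        clear_value S K B
        linarith
end

section
/- Let Θ ⊆ ℝᵐ be compact and (f_θ)_{θ∈Θ} satisfy: δ ≤ f_θ(λ) ≤ Γ for all θ, λ (0 < δ ≤ Γ < ∞), (λ,θ) ↦ f_θ(λ) is continuous on [−π,π] × Θ, and λ ↦ f_θ(λ) is Lipschitz with constant L uniformly in θ. Let f : [−π,π] → [0,F] be Lipschitz with constant L and suppose D(·,f) has a unique minimizer θ₀ ∈ Θ. Let gₙ : [−π,π] → ℝ be bounded functions with sup_{λ∈[−π,π]} |gₙ(λ) − f(λ)| → 0, and let θ̂₀,ₙ ∈ Θ minimize θ ↦ Dₙ(θ, gₙ) over Θ. Then θ ↦ D(θ,f) is continuous on Θ and θ̂₀,ₙ → θ₀ as n → ∞.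 -/
open Real MeasureTheory Filter Topology

lemma mylog_lip {d a b : ℝ} (hd : 0 < d) (ha : d ≤ a) (hb : d ≤ b) :
    |Real.log a - Real.log b| ≤ |a - b| / d := by
  wlog hab : b ≤ a generalizing a b
  · rw [abs_sub_comm, abs_sub_comm a b]; exact this hb ha (le_of_not_ge hab)
  have hb0 : 0 < b := lt_of_lt_of_le hd hb
  have ha0 : 0 < a := lt_of_lt_of_le hd ha
  have h1 : Real.log a - Real.log b = Real.log (a / b) := by
    rw [Real.log_div (ne_of_gt ha0) (ne_of_gt hb0)]
  have h2 : Real.log (a / b) ≤ a / b - 1 := Real.log_le_sub_one_of_pos (div_pos ha0 hb0)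
  have h3 : a / b - 1 = (a - b) / b := by field_simp
  have h4 : (a - b) / b ≤ (a - b) / d := by
    apply div_le_div_of_nonneg_left <;> linarith
  rw [abs_of_nonneg (by linarith : (0:ℝ) ≤ a - b)]
  rw [abs_of_nonneg (by rw [sub_nonneg]; exact Real.log_le_log hb0 hab)]
  linarith

lemma mycont_of_lip {h : ℝ → ℝ} {s : Set ℝ} {L : ℝ}
    (hl : ∀ x ∈ s, ∀ y ∈ s, |h x - h y| ≤ L * |x - y|) : ContinuousOn h s := by
  refine (LipschitzOnWith.of_dist_le_mul (K := L.toNNReal) ?_).continuousOn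
  intro x hx y hy
  rw [Real.dist_eq, Real.dist_eq]
  calc |h x - h y| ≤ L * |x - y| := hl x hx y hy
    _ ≤ L.toNNReal * |x - y| := by
        apply mul_le_mul_of_nonneg_right (Real.le_coe_toNNReal L) (abs_nonneg _)

lemma mysum_G (h : ℤ → ℝ) (k : ℕ) :
    ∑ j ∈ (Finset.Icc (-(k:ℤ)) (k:ℤ)).erase 0, h j
      = ∑ i ∈ Finset.range k, (h (i+1) + h (-(i+1))) := by
  induction k with
  | zero => simp
  | succ k ih =>
    have hset : (Finset.Icc (-(k+1:ℕ):ℤ) ((k+1:ℕ):ℤ)).erase 0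
        = insert ((k:ℤ)+1) (insert (-((k:ℤ)+1)) ((Finset.Icc (-(k:ℤ)) (k:ℤ)).erase 0)) := by
      ext j; simp; omega
    rw [hset, Finset.sum_insert, Finset.sum_insert, ih, Finset.sum_range_succ]
    · ring
    · simp
    · simp only [Finset.mem_insert, Finset.mem_erase, Finset.mem_Icc]; omega

lemma myriemann_pos (h : ℝ → ℝ) (K B : ℝ) (hK : 0 ≤ K) (hB : 0 ≤ B) (n : ℕ) (hn : 0 < n)
    (hlip : ∀ x ∈ Set.Icc (0:ℝ) π, ∀ y ∈ Set.Icc (0:ℝ) π, |h x - h y| ≤ K * |x - y|)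
    (hbd : ∀ x ∈ Set.Icc (0:ℝ) π, |h x| ≤ B) :
    |∑ i ∈ Finset.range (n/2), (2*π/n) * h (2*π*(i+1)/n) - ∫ x in (0:ℝ)..π, h x|
      ≤ 2*π^2*K/n + π*B/n := by
  have hπ : (0:ℝ) < π := Real.pi_pos
  have hn' : (0:ℝ) < n := by exact_mod_cast hn
  set k := n / 2 with hk
  have h2k : 2 * k ≤ n := by omega
  have h2k' : n ≤ 2 * k + 1 := by omega
  set a : ℕ → ℝ := fun i => 2*π*i/n with ha
  have hmono : ∀ i, a i ≤ a (i+1) := by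
    intro i
    simp only [ha]
    push_cast
    gcongr
    linarith
  have hamem : ∀ i ≤ k, a i ∈ Set.Icc (0:ℝ) π := by
    intro i hi
    constructor
    · positivity
    · simp only [ha]
      rw [div_le_iff₀ hn']
      have : (i:ℝ) ≤ k := by exact_mod_cast hi
      have h2 : 2*(k:ℝ) ≤ n := by exact_mod_cast h2k
      nlinarith
  have hsub : ∀ i < k, Set.uIcc (a i) (a (i+1)) ⊆ Set.Icc (0:ℝ) π := by
    intro i hi
    rw [Set.uIcc_of_le (hmono i)]
    exact Set.Icc_subset_Icc (hamem i (by omega)).1 (hamem (i+1) (by omega)).2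
  have hcont : ContinuousOn h (Set.Icc (0:ℝ) π) := mycont_of_lip hlip
  have hint : ∀ i < k, IntervalIntegrable h volume (a i) (a (i+1)) := by
    intro i hi
    exact (hcont.mono (hsub i hi)).intervalIntegrable
  have hsplit : ∑ i ∈ Finset.range k, ∫ x in (a i)..(a (i+1)), h x
      = ∫ x in (a 0)..(a k), h x :=
    intervalIntegral.sum_integral_adjacent_intervals hint
  have hlen : ∀ i : ℕ, a (i+1) - a i = 2*π/n := by
    intro i; simp only [ha]; push_cast; field_simp; ring
  have hterm : ∀ i ∈ Finset.range k,
      |(2*π/n) * h (a (i+1)) - ∫ x in (a i)..(a (i+1)), h x| ≤ K * (2*π/n) * (2*π/n) := by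
    intro i hi
    rw [Finset.mem_range] at hi
    have hc : (2*π/n) * h (a (i+1)) = ∫ x in (a i)..(a (i+1)), h (a (i+1)) := by
      rw [intervalIntegral.integral_const, hlen i, smul_eq_mul]
    rw [hc, ← intervalIntegral.integral_sub (intervalIntegrable_const) (hint i hi)]
    have := intervalIntegral.norm_integral_le_of_norm_le_const
      (C := K * (2*π/n)) (f := fun x => h (a (i+1)) - h x) (a := a i) (b := a (i+1)) ?_
    · calc |∫ x in (a i)..(a (i+1)), (h (a (i+1)) - h x)|
          ≤ K * (2*π/n) * |a (i+1) - a i| := this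
        _ = K * (2*π/n) * (2*π/n) := by rw [hlen i, abs_of_pos (by positivity)]
    · intro x hx
      rw [Set.uIoc_of_le (hmono i)] at hx
      have hx1 : x ∈ Set.Icc (0:ℝ) π := (hsub i hi) (by
        rw [Set.uIcc_of_le (hmono i)]; exact ⟨le_of_lt hx.1, hx.2⟩)
      have : |h (a (i+1)) - h x| ≤ K * |a (i+1) - x| :=
        hlip _ (hamem (i+1) (by omega)) x hx1
      calc ‖h (a (i+1)) - h x‖ = |h (a (i+1)) - h x| := rfl
        _ ≤ K * |a (i+1) - x| := this
        _ ≤ K * (2*π/n) := by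
            apply mul_le_mul_of_nonneg_left _ hK
            rw [abs_of_nonneg (by linarith [hx.2] : (0:ℝ) ≤ a (i+1) - x)]
            have := hx.1
            have := hlen i
            linarith
  have hae : ∀ i : ℕ, (2*π*((i:ℝ)+1)/n) = a (i+1) := by
    intro i; simp only [ha]; push_cast; ring
  have hk2 : (k:ℝ) ≤ (n:ℝ)/2 := by
    have : (2*(k:ℝ)) ≤ n := by exact_mod_cast h2k
    linarith
  have hsum : |∑ i ∈ Finset.range k, (2*π/n) * h (a (i+1)) - ∫ x in (a 0)..(a k), h x|
      ≤ 2*π^2*K/n := by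
    rw [← hsplit, ← Finset.sum_sub_distrib]
    calc |∑ i ∈ Finset.range k, ((2*π/n) * h (a (i+1)) - ∫ x in (a i)..(a (i+1)), h x)|
        ≤ ∑ i ∈ Finset.range k, |(2*π/n) * h (a (i+1)) - ∫ x in (a i)..(a (i+1)), h x| :=
          Finset.abs_sum_le_sum_abs _ _
      _ ≤ ∑ _i ∈ Finset.range k, K * (2*π/n) * (2*π/n) := Finset.sum_le_sum hterm
      _ = (k:ℝ) * (K * (2*π/n) * (2*π/n)) := by
          rw [Finset.sum_const, Finset.card_range, nsmul_eq_mul]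
      _ ≤ 2*π^2*K/n := by
          rw [show ((k:ℝ) * (K * (2*π/n) * (2*π/n))) = 4*π^2*K*k/n^2 by field_simp; ring]
          rw [div_le_div_iff₀ (by positivity) hn']
          nlinarith [mul_le_mul_of_nonneg_left hk2 (show (0:ℝ) ≤ 2*π^2*K*n by positivity)]
  have hak_le : a k ≤ π := (hamem k le_rfl).2
  have hak_ge : 0 ≤ a k := (hamem k le_rfl).1
  have hakπ : π - a k ≤ π/n := by
    have h2' : (n:ℝ) ≤ 2*(k:ℝ)+1 := by exact_mod_cast h2k'
    simp only [ha]
    rw [sub_le_iff_le_add, ← add_div, le_div_iff₀ hn']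
    nlinarith
  have hint2 : IntervalIntegrable h volume (a k) π := by
    apply (hcont.mono _).intervalIntegrable
    rw [Set.uIcc_of_le hak_le]
    exact Set.Icc_subset_Icc hak_ge le_rfl
  have ha0 : a 0 = 0 := by simp [ha]
  have hint1 : IntervalIntegrable h volume (a 0) (a k) := by
    apply (hcont.mono _).intervalIntegrable
    rw [ha0, Set.uIcc_of_le hak_ge]
    exact Set.Icc_subset_Icc le_rfl hak_le
  have htail : |∫ x in (a k)..π, h x| ≤ π*B/n := by
    have := intervalIntegral.norm_integral_le_of_norm_le_const
      (C := B) (f := h) (a := a k) (b := π) ?_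
    · calc |∫ x in (a k)..π, h x| ≤ B * |π - a k| := this
        _ ≤ B * (π/n) := by
            apply mul_le_mul_of_nonneg_left _ hB
            rw [abs_of_nonneg (by linarith)]
            exact hakπ
        _ = π*B/n := by ring
    · intro x hx
      rw [Set.uIoc_of_le hak_le] at hx
      exact hbd x ⟨le_trans hak_ge hx.1.le, hx.2⟩
  have hdecomp : (∫ x in (a 0)..π, h x)
      = (∫ x in (a 0)..(a k), h x) + ∫ x in (a k)..π, h x :=
    (intervalIntegral.integral_add_adjacent_intervals hint1 hint2).symm
  simp only [hae]
  rw [show (0:ℝ) = a 0 from ha0.symm, hdecomp]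
  rw [show ∀ S A T : ℝ, S - (A + T) = (S - A) + (-T) from fun _ _ _ => by ring]
  refine le_trans (abs_add_le _ _) ?_
  rw [abs_neg]
  linarith

lemma myriemann_full (h : ℝ → ℝ) (K B : ℝ) (hK : 0 ≤ K) (hB : 0 ≤ B) (n : ℕ) (hn : 0 < n)
    (hlip : ∀ x ∈ Set.Icc (-π) π, ∀ y ∈ Set.Icc (-π) π, |h x - h y| ≤ K * |x - y|)
    (hbd : ∀ x ∈ Set.Icc (-π) π, |h x| ≤ B) :
    |(1/(n:ℝ)) * ∑ j ∈ (Finset.Icc (-((n / 2 : ℕ) : ℤ)) ((n / 2 : ℕ) : ℤ)).erase 0,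
        h (2 * π * (j : ℝ) / (n : ℝ))
      - (1/(2*π)) * ∫ x in (-π)..π, h x| ≤ (2*π*K + B)/n := by
  have hπ : (0:ℝ) < π := Real.pi_pos
  have hn' : (0:ℝ) < n := by exact_mod_cast hn
  set k := n / 2 with hk
  set h₂ : ℝ → ℝ := fun x => h (-x) with hh₂
  have hsub1 : Set.Icc (0:ℝ) π ⊆ Set.Icc (-π) π := Set.Icc_subset_Icc (by linarith) le_rfl
  have hnegmem : ∀ x ∈ Set.Icc (0:ℝ) π, -x ∈ Set.Icc (-π) π := by
    intro x hx; constructor <;> [linarith [hx.2]; linarith [hx.1]]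
  have hlip1 : ∀ x ∈ Set.Icc (0:ℝ) π, ∀ y ∈ Set.Icc (0:ℝ) π, |h x - h y| ≤ K * |x - y| :=
    fun x hx y hy => hlip x (hsub1 hx) y (hsub1 hy)
  have hbd1 : ∀ x ∈ Set.Icc (0:ℝ) π, |h x| ≤ B := fun x hx => hbd x (hsub1 hx)
  have hlip2 : ∀ x ∈ Set.Icc (0:ℝ) π, ∀ y ∈ Set.Icc (0:ℝ) π, |h₂ x - h₂ y| ≤ K * |x - y| := by
    intro x hx y hy
    calc |h (-x) - h (-y)| ≤ K * |(-x) - (-y)| := hlip _ (hnegmem x hx) _ (hnegmem y hy)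
      _ = K * |x - y| := by rw [show (-x) - (-y) = -(x-y) by ring, abs_neg]
  have hbd2 : ∀ x ∈ Set.Icc (0:ℝ) π, |h₂ x| ≤ B := fun x hx => hbd _ (hnegmem x hx)
  have h1 := myriemann_pos h K B hK hB n hn hlip1 hbd1
  have h2 := myriemann_pos h₂ K B hK hB n hn hlip2 hbd2
  -- sum identity
  have hS := mysum_G (fun j : ℤ => h (2 * π * (j : ℝ) / (n : ℝ))) k
  push_cast at hS
  -- integral decomposition
  have hcont : ContinuousOn h (Set.Icc (-π) π) := mycont_of_lip hlip
  have hi1 : IntervalIntegrable h volume (-π) 0 := by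
    apply (hcont.mono _).intervalIntegrable
    rw [Set.uIcc_of_le (by linarith)]
    exact Set.Icc_subset_Icc le_rfl (by linarith)
  have hi2 : IntervalIntegrable h volume 0 π := by
    apply (hcont.mono _).intervalIntegrable
    rw [Set.uIcc_of_le (by linarith)]
    exact hsub1
  have hneg : (∫ x in (0:ℝ)..π, h₂ x) = ∫ x in (-π)..(0:ℝ), h x := by
    simp only [hh₂]
    rw [intervalIntegral.integral_comp_neg h]
    norm_num
  have hdecomp : (∫ x in (-π)..π, h x) = (∫ x in (0:ℝ)..π, h x) + ∫ x in (0:ℝ)..π, h₂ x := by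
    rw [hneg, ← intervalIntegral.integral_add_adjacent_intervals hi1 hi2]
    ring
  -- algebra
  have key : (1/(n:ℝ)) * ∑ j ∈ (Finset.Icc (-((n / 2 : ℕ) : ℤ)) ((n / 2 : ℕ) : ℤ)).erase 0,
        h (2 * π * (j : ℝ) / (n : ℝ))
      = (1/(2*π)) * ((∑ i ∈ Finset.range k, (2*π/n) * h (2*π*((i:ℝ)+1)/n))
          + ∑ i ∈ Finset.range k, (2*π/n) * h₂ (2*π*((i:ℝ)+1)/n)) := by
    rw [hS, mul_add, Finset.mul_sum, Finset.mul_sum, Finset.mul_sum, ← Finset.sum_add_distrib]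
    apply Finset.sum_congr rfl
    intro i _
    have e2 : 2*π*(-((i:ℝ)+1))/n = -(2*π*((i:ℝ)+1)/n) := by ring
    simp only [hh₂, e2]
    field_simp
  rw [key]
  have expand : (1/(2*π)) * ((∑ i ∈ Finset.range k, (2*π/n) * h (2*π*((i:ℝ)+1)/n))
          + ∑ i ∈ Finset.range k, (2*π/n) * h₂ (2*π*((i:ℝ)+1)/n))
      - (1/(2*π)) * ∫ x in (-π)..π, h x
      = (1/(2*π)) * (((∑ i ∈ Finset.range k, (2*π/n) * h (2*π*((i:ℝ)+1)/n))
            - ∫ x in (0:ℝ)..π, h x)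
          + ((∑ i ∈ Finset.range k, (2*π/n) * h₂ (2*π*((i:ℝ)+1)/n))
            - ∫ x in (0:ℝ)..π, h₂ x)) := by
    rw [hdecomp]; ring
  rw [expand, abs_mul, abs_of_pos (show (0:ℝ) < 1/(2*π) by positivity)]
  calc (1/(2*π)) * |_ + _| ≤ (1/(2*π)) * ((2*π^2*K/n + π*B/n) + (2*π^2*K/n + π*B/n)) := by
        apply mul_le_mul_of_nonneg_left _ (by positivity)
        exact le_trans (abs_add_le _ _) (by linarith)
    _ = (2*π*K + B)/n := by field_simp; ring

lemma myfreq_mem {n : ℕ} (hn : 0 < n) {j : ℤ}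
    (hj : j ∈ (Finset.Icc (-((n / 2 : ℕ) : ℤ)) ((n / 2 : ℕ) : ℤ)).erase 0) :
    2 * π * (j : ℝ) / (n : ℝ) ∈ Set.Icc (-π) π := by
  have hπ : (0:ℝ) < π := Real.pi_pos
  have hn' : (0:ℝ) < n := by exact_mod_cast hn
  rw [Finset.mem_erase, Finset.mem_Icc] at hj
  have hl : -(n:ℤ) ≤ 2*j := by omega
  have hr : 2*j ≤ (n:ℤ) := by omega
  have hlr : -(n:ℝ) ≤ 2*(j:ℝ) := by exact_mod_cast hl
  have hrr : 2*(j:ℝ) ≤ (n:ℝ) := by exact_mod_cast hr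
  rw [Set.mem_Icc]
  constructor
  · rw [le_div_iff₀ hn']
    nlinarith [mul_le_mul_of_nonneg_left hlr hπ.le]
  · rw [div_le_iff₀ hn']
    nlinarith [mul_le_mul_of_nonneg_left hrr hπ.le]

lemma mycard {n : ℕ} :
    (((Finset.Icc (-((n / 2 : ℕ) : ℤ)) ((n / 2 : ℕ) : ℤ)).erase 0).card : ℝ) ≤ (n : ℝ) := by
  have h0 : (0:ℤ) ∈ Finset.Icc (-((n / 2 : ℕ) : ℤ)) ((n / 2 : ℕ) : ℤ) := by
    simp only [Finset.mem_Icc]; omega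
  rw [Finset.card_erase_of_mem h0, Int.card_Icc]
  have : ((((n / 2 : ℕ) : ℤ)) + 1 - (-((n / 2 : ℕ) : ℤ))).toNat = 2*(n/2)+1 := by omega
  rw [this]
  have : 2*(n/2) ≤ n := by omega
  exact_mod_cast by omega

lemma mydisc_diff {Θ' : Type*} (f : Θ' → ℝ → ℝ) (n : ℕ) (hn : 0 < n) (g₁ g₂ : ℝ → ℝ) (θ : Θ')
    (δ : ℝ) (hδ : 0 < δ) (hfδ : ∀ x ∈ Set.Icc (-π) π, δ ≤ f θ x)
    (ε : ℝ) (hε : 0 ≤ ε) (hg : ∀ x ∈ Set.Icc (-π) π, |g₁ x - g₂ x| ≤ ε) :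
    |whittleDisc f n g₁ θ - whittleDisc f n g₂ θ| ≤ ε/δ := by
  have hn' : (0:ℝ) < n := by exact_mod_cast hn
  simp only [whittleDisc]
  rw [← mul_sub, ← Finset.sum_sub_distrib, abs_mul]
  have hterm : ∀ j ∈ (Finset.Icc (-((n / 2 : ℕ) : ℤ)) ((n / 2 : ℕ) : ℤ)).erase 0,
      |(Real.log (f θ (2*π*(j:ℝ)/n)) + g₁ (2*π*(j:ℝ)/n) / f θ (2*π*(j:ℝ)/n))
        - (Real.log (f θ (2*π*(j:ℝ)/n)) + g₂ (2*π*(j:ℝ)/n) / f θ (2*π*(j:ℝ)/n))| ≤ ε/δ := by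
    intro j hj
    have hx := myfreq_mem hn hj
    have hf := hfδ _ hx
    have hf0 : 0 < f θ (2*π*(j:ℝ)/n) := lt_of_lt_of_le hδ hf
    rw [show ∀ l a b c : ℝ, (l + a/c) - (l + b/c) = (a-b)/c from fun _ _ _ _ => by ring,
      abs_div, abs_of_pos hf0]
    exact div_le_div₀ hε (hg _ hx) hδ hf
  calc |1/(n:ℝ)| * |∑ j ∈ (Finset.Icc (-((n / 2 : ℕ) : ℤ)) ((n / 2 : ℕ) : ℤ)).erase 0,
        ((Real.log (f θ (2*π*(j:ℝ)/n)) + g₁ (2*π*(j:ℝ)/n) / f θ (2*π*(j:ℝ)/n))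
        - (Real.log (f θ (2*π*(j:ℝ)/n)) + g₂ (2*π*(j:ℝ)/n) / f θ (2*π*(j:ℝ)/n)))|
      ≤ (1/(n:ℝ)) * (((Finset.Icc (-((n / 2 : ℕ) : ℤ)) ((n / 2 : ℕ) : ℤ)).erase 0).card * (ε/δ)) := by
        rw [abs_of_pos (by positivity : (0:ℝ) < 1/(n:ℝ))]
        apply mul_le_mul_of_nonneg_left _ (by positivity)
        calc |∑ j ∈ _, _| ≤ _ := Finset.abs_sum_le_sum_abs _ _
          _ ≤ _ := Finset.sum_le_sum hterm
          _ = ((Finset.Icc (-((n / 2 : ℕ) : ℤ)) ((n / 2 : ℕ) : ℤ)).erase 0).card * (ε/δ) := by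
              rw [Finset.sum_const, nsmul_eq_mul]
    _ ≤ ε/δ := by
        rw [show (1:ℝ)/n * (((Finset.Icc (-((n / 2 : ℕ) : ℤ)) ((n / 2 : ℕ) : ℤ)).erase 0).card * (ε/δ))
          = (((Finset.Icc (-((n / 2 : ℕ) : ℤ)) ((n / 2 : ℕ) : ℤ)).erase 0).card / n) * (ε/δ) from by ring]
        apply mul_le_of_le_one_left (by positivity)
        rw [div_le_one hn']
        exact mycard

lemma mycont_diff (h₁ h₂ : ℝ → ℝ) (C : ℝ) (hC : 0 ≤ C)
    (hi₁ : IntervalIntegrable h₁ volume (-π) π) (hi₂ : IntervalIntegrable h₂ volume (-π) π)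
    (hb : ∀ x ∈ Set.Icc (-π) π, |h₁ x - h₂ x| ≤ C) :
    |(1/(2*π)) * (∫ x in (-π)..π, h₁ x) - (1/(2*π)) * ∫ x in (-π)..π, h₂ x| ≤ C := by
  have hπ := Real.pi_pos
  rw [← mul_sub, ← intervalIntegral.integral_sub hi₁ hi₂, abs_mul,
    abs_of_pos (show (0:ℝ) < 1/(2*π) by positivity)]
  have key := intervalIntegral.norm_integral_le_of_norm_le_const (C := C)
    (f := fun x => h₁ x - h₂ x) (a := -π) (b := π) ?_
  · calc (1/(2*π)) * |∫ x in (-π)..π, (h₁ x - h₂ x)| ≤ (1/(2*π)) * (C * |π - (-π)|) :=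
        mul_le_mul_of_nonneg_left key (by positivity)
      _ = C := by
          rw [abs_of_pos (by linarith : (0:ℝ) < π - (-π)), show π - -π = 2*π by ring,
            show (1/(2*π))*(C*(2*π)) = C * (2*π*(1/(2*π))) by ring, one_div,
            mul_inv_cancel₀ (by positivity : (2*π:ℝ) ≠ 0), mul_one]
  · intro x hx
    rw [Set.uIoc_of_le (by linarith : -π ≤ π)] at hx
    exact hb x ⟨hx.1.le, hx.2⟩

/-- Deterministic form of Lemma 7.1(i): the minimizers of the discrete Whittle contrast
with uniformly convergent estimated spectral densities converge to the unique minimizer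
of the integrated Whittle contrast. -/
theorem stmt_4 {m : ℕ} (Θ : Set (EuclideanSpace ℝ (Fin m))) (hΘ : IsCompact Θ)
    (δ Γ L F : ℝ) (hδ : 0 < δ) (hΓ : δ ≤ Γ) (hL : 0 ≤ L) (hF : 0 ≤ F)
    (f : EuclideanSpace ℝ (Fin m) → ℝ → ℝ)
    (hbound : ∀ θ ∈ Θ, ∀ x ∈ Set.Icc (-π) π, δ ≤ f θ x ∧ f θ x ≤ Γ)
    (hcont : ContinuousOn (fun p : ℝ × EuclideanSpace ℝ (Fin m) => f p.2 p.1)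
      (Set.Icc (-π) π ×ˢ Θ))
    (hlip : ∀ θ ∈ Θ, ∀ x ∈ Set.Icc (-π) π, ∀ y ∈ Set.Icc (-π) π,
      |f θ x - f θ y| ≤ L * |x - y|)
    (f₀ : ℝ → ℝ) (hf₀ : ∀ x ∈ Set.Icc (-π) π, 0 ≤ f₀ x ∧ f₀ x ≤ F)
    (hf₀lip : ∀ x ∈ Set.Icc (-π) π, ∀ y ∈ Set.Icc (-π) π, |f₀ x - f₀ y| ≤ L * |x - y|)
    (θ₀ : EuclideanSpace ℝ (Fin m)) (hθ₀ : θ₀ ∈ Θ)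
    (hmin : ∀ θ ∈ Θ, θ ≠ θ₀ → whittleCont f f₀ θ₀ < whittleCont f f₀ θ)
    (g : ℕ → ℝ → ℝ) (hgb : ∀ n, ∃ M, ∀ x, |g n x| ≤ M)
    (hgconv : ∀ ε > (0 : ℝ), ∃ N : ℕ, ∀ n ≥ N, ∀ x ∈ Set.Icc (-π) π, |g n x - f₀ x| ≤ ε)
    (θhat : ℕ → EuclideanSpace ℝ (Fin m)) (hθhatΘ : ∀ n, θhat n ∈ Θ)
    (hθhatmin : ∀ n, ∀ θ ∈ Θ, whittleDisc f n (g n) (θhat n) ≤ whittleDisc f n (g n) θ) :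
    ContinuousOn (whittleCont f f₀) Θ ∧ Tendsto θhat atTop (𝓝 θ₀) := by
  have hπ : (0:ℝ) < π := Real.pi_pos
  set K : ℝ := 2*L/δ + F*L/δ^2 with hKdef
  set B : ℝ := |Real.log δ| + |Real.log Γ| + F/δ with hBdef
  set C : ℝ := 1/δ + F/δ^2 with hCdef
  have hK : 0 ≤ K := by
    apply add_nonneg
    · positivity
    · positivity
  have hB : 0 ≤ B := by positivity
  have hC0 : 0 ≤ C := by positivity
  -- Lipschitz property of the integrand
  have hIlip : ∀ θ ∈ Θ, ∀ x ∈ Set.Icc (-π) π, ∀ y ∈ Set.Icc (-π) π,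
      |(Real.log (f θ x) + f₀ x / f θ x) - (Real.log (f θ y) + f₀ y / f θ y)|
        ≤ K * |x - y| := by
    intro θ hθ x hx y hy
    obtain ⟨hax, hax'⟩ := hbound θ hθ x hx
    obtain ⟨hay, hay'⟩ := hbound θ hθ y hy
    obtain ⟨hfx, hfx'⟩ := hf₀ x hx
    obtain ⟨hfy, hfy'⟩ := hf₀ y hy
    have ha0 : 0 < f θ x := lt_of_lt_of_le hδ hax
    have hb0 : 0 < f θ y := lt_of_lt_of_le hδ hay
    have hlog : |Real.log (f θ x) - Real.log (f θ y)| ≤ L * |x-y| / δ := by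
      calc |Real.log (f θ x) - Real.log (f θ y)| ≤ |f θ x - f θ y|/δ := mylog_lip hδ hax hay
        _ ≤ L * |x-y| / δ := by gcongr; exact hlip θ hθ x hx y hy
    have hdiv : |f₀ x / f θ x - f₀ y / f θ y| ≤ L*|x-y|/δ + F*(L*|x-y|)/δ^2 := by
      have e : f₀ x / f θ x - f₀ y / f θ y
          = (f₀ x - f₀ y)/(f θ x) + f₀ y * (f θ y - f θ x)/(f θ x * f θ y) := by
        field_simp
        ring
      rw [e]
      have t1 : |(f₀ x - f₀ y)/(f θ x)| ≤ L*|x-y|/δ := by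
        rw [abs_div, abs_of_pos ha0]
        exact div_le_div₀ (by positivity) (hf₀lip x hx y hy) hδ hax
      have t2 : |f₀ y * (f θ y - f θ x)/(f θ x * f θ y)| ≤ F*(L*|x-y|)/δ^2 := by
        rw [abs_div, abs_mul, abs_of_pos (mul_pos ha0 hb0), abs_of_nonneg hfy]
        apply div_le_div₀ (mul_nonneg hF (mul_nonneg hL (abs_nonneg _))) _ (by positivity) _
        · apply mul_le_mul hfy' _ (abs_nonneg _) hF
          calc |f θ y - f θ x| ≤ L * |y - x| := hlip θ hθ y hy x hx
            _ = L * |x-y| := by rw [abs_sub_comm]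
        · calc δ^2 = δ*δ := sq δ
            _ ≤ f θ x * f θ y := mul_le_mul hax hay hδ.le ha0.le
      calc |(f₀ x - f₀ y)/(f θ x) + f₀ y * (f θ y - f θ x)/(f θ x * f θ y)|
          ≤ |(f₀ x - f₀ y)/(f θ x)| + |f₀ y * (f θ y - f θ x)/(f θ x * f θ y)| := abs_add_le _ _
        _ ≤ L*|x-y|/δ + F*(L*|x-y|)/δ^2 := by linarith
    have hKeq : K*|x-y| = L*|x-y|/δ + (L*|x-y|/δ + F*(L*|x-y|)/δ^2) := by
      rw [hKdef]; field_simp; ring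
    calc |(Real.log (f θ x) + f₀ x / f θ x) - (Real.log (f θ y) + f₀ y / f θ y)|
        = |(Real.log (f θ x) - Real.log (f θ y)) + (f₀ x / f θ x - f₀ y / f θ y)| := by
          ring_nf
      _ ≤ |Real.log (f θ x) - Real.log (f θ y)| + |f₀ x / f θ x - f₀ y / f θ y| := abs_add_le _ _
      _ ≤ K * |x-y| := by rw [hKeq]; linarith
  -- bound on the integrand
  have hIbd : ∀ θ ∈ Θ, ∀ x ∈ Set.Icc (-π) π,
      |Real.log (f θ x) + f₀ x / f θ x| ≤ B := by
    intro θ hθ x hx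
    obtain ⟨hax, hax'⟩ := hbound θ hθ x hx
    obtain ⟨hfx, hfx'⟩ := hf₀ x hx
    have ha0 : 0 < f θ x := lt_of_lt_of_le hδ hax
    have h1 : |Real.log (f θ x)| ≤ |Real.log δ| + |Real.log Γ| := by
      rw [abs_le]
      constructor
      · have h2 := Real.log_le_log hδ hax
        have h3 : -|Real.log δ| ≤ Real.log δ := neg_abs_le _
        have h4 : (0:ℝ) ≤ |Real.log Γ| := abs_nonneg _
        linarith
      · have h2 := Real.log_le_log ha0 hax'
        have h3 := le_abs_self (Real.log Γ)
        have h4 : (0:ℝ) ≤ |Real.log δ| := abs_nonneg _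
        linarith
    have h2 : |f₀ x / f θ x| ≤ F/δ := by
      rw [abs_div, abs_of_pos ha0, abs_of_nonneg hfx]
      exact div_le_div₀ hF hfx' hδ hax
    calc |Real.log (f θ x) + f₀ x / f θ x| ≤ |Real.log (f θ x)| + |f₀ x / f θ x| := abs_add_le _ _
      _ ≤ B := by rw [hBdef]; linarith
  -- integrability
  have hII : ∀ θ ∈ Θ, IntervalIntegrable (fun x => Real.log (f θ x) + f₀ x / f θ x)
      volume (-π) π := by
    intro θ hθ
    apply ContinuousOn.intervalIntegrable
    apply (mycont_of_lip (hIlip θ hθ)).mono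
    rw [Set.uIcc_of_le (by linarith : -π ≤ π)]
  -- contrast difference bound in θ
  have hDdiff : ∀ θ ∈ Θ, ∀ θ' ∈ Θ, ∀ d : ℝ,
      (∀ x ∈ Set.Icc (-π) π, |f θ x - f θ' x| ≤ d) →
      |whittleCont f f₀ θ - whittleCont f f₀ θ'| ≤ C * d := by
    intro θ hθ θ' hθ' d hd
    have hd0 : 0 ≤ d := le_trans (abs_nonneg _) (hd 0 ⟨by linarith, by linarith⟩)
    apply mycont_diff _ _ _ (by positivity) (hII θ hθ) (hII θ' hθ')
    intro x hx
    obtain ⟨hax, hax'⟩ := hbound θ hθ x hx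
    obtain ⟨hay, hay'⟩ := hbound θ' hθ' x hx
    obtain ⟨hfx, hfx'⟩ := hf₀ x hx
    have ha0 : 0 < f θ x := lt_of_lt_of_le hδ hax
    have hb0 : 0 < f θ' x := lt_of_lt_of_le hδ hay
    have hlog : |Real.log (f θ x) - Real.log (f θ' x)| ≤ d/δ := by
      calc |Real.log (f θ x) - Real.log (f θ' x)| ≤ |f θ x - f θ' x|/δ := mylog_lip hδ hax hay
        _ ≤ d / δ := by gcongr; exact hd x hx
    have hdiv : |f₀ x / f θ x - f₀ x / f θ' x| ≤ F*d/δ^2 := by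
      have e : f₀ x / f θ x - f₀ x / f θ' x
          = f₀ x * (f θ' x - f θ x)/(f θ x * f θ' x) := by
        field_simp
      rw [e, abs_div, abs_mul, abs_of_pos (mul_pos ha0 hb0), abs_of_nonneg hfx]
      apply div_le_div₀ (mul_nonneg hF hd0) _ (by positivity) _
      · apply mul_le_mul hfx' _ (abs_nonneg _) hF
        rw [abs_sub_comm]
        exact hd x hx
      · calc δ^2 = δ*δ := sq δ
          _ ≤ f θ x * f θ' x := mul_le_mul hax hay hδ.le ha0.le
    have hCeq : C*d = d/δ + F*d/δ^2 := by rw [hCdef]; field_simp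
    calc |(Real.log (f θ x) + f₀ x / f θ x) - (Real.log (f θ' x) + f₀ x / f θ' x)|
        = |(Real.log (f θ x) - Real.log (f θ' x)) + (f₀ x / f θ x - f₀ x / f θ' x)| := by
          ring_nf
      _ ≤ |Real.log (f θ x) - Real.log (f θ' x)| + |f₀ x / f θ x - f₀ x / f θ' x| := abs_add_le _ _
      _ ≤ C * d := by rw [hCeq]; linarith
  -- continuity of the integrated contrast
  have hcompact : IsCompact (Set.Icc (-π) π ×ˢ Θ) := isCompact_Icc.prod hΘ
  have hunif := hcompact.uniformContinuousOn_of_continuous hcont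
  rw [Metric.uniformContinuousOn_iff] at hunif
  have hcontD : ContinuousOn (whittleCont f f₀) Θ := by
    rw [Metric.continuousOn_iff]
    intro θ hθ ε hε
    obtain ⟨d, hd, hdp⟩ := hunif (ε/(2*(C+1))) (by positivity)
    refine ⟨d, hd, ?_⟩
    intro θ' hθ' hdist
    have hptw : ∀ x ∈ Set.Icc (-π) π, |f θ' x - f θ x| ≤ ε/(2*(C+1)) := by
      intro x hx
      have := hdp (x, θ') ⟨hx, hθ'⟩ (x, θ) ⟨hx, hθ⟩ (by
        rw [Prod.dist_eq]
        simp only [dist_self]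
        rw [max_eq_right dist_nonneg]
        exact hdist)
      rw [Real.dist_eq] at this
      exact this.le
    have hb := hDdiff θ' hθ' θ hθ _ hptw
    rw [Real.dist_eq]
    calc |whittleCont f f₀ θ' - whittleCont f f₀ θ| ≤ C * (ε/(2*(C+1))) := hb
      _ ≤ ε/2 := by
          rw [mul_div_assoc', div_le_div_iff₀ (by positivity) (by norm_num)]
          nlinarith
      _ < ε := by linarith
  refine ⟨hcontD, ?_⟩
  -- uniform convergence of discrete contrasts
  have hUNIF : ∀ ε > (0:ℝ), ∃ N : ℕ, ∀ n ≥ N, ∀ θ ∈ Θ,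
      |whittleDisc f n (g n) θ - whittleCont f f₀ θ| ≤ ε := by
    intro ε hε
    obtain ⟨N₁, hN₁⟩ := hgconv (ε*δ/2) (by positivity)
    obtain ⟨N₂, hN₂⟩ := exists_nat_gt ((2*π*K + B)/(ε/2))
    refine ⟨max N₁ (max N₂ 1), ?_⟩
    intro n hn θ hθ
    have hn1 : 1 ≤ n := le_trans (le_max_of_le_right (le_max_right _ _)) hn
    have hnpos : 0 < n := hn1
    have hn' : (0:ℝ) < n := by exact_mod_cast hnpos
    have hp1 : |whittleDisc f n (g n) θ - whittleDisc f n f₀ θ| ≤ (ε*δ/2)/δ :=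
      mydisc_diff f n hnpos (g n) f₀ θ δ hδ (fun x hx => (hbound θ hθ x hx).1) _ (by positivity)
        (hN₁ n (le_trans (le_max_left _ _) hn))
    have hp1' : |whittleDisc f n (g n) θ - whittleDisc f n f₀ θ| ≤ ε/2 := by
      rwa [show (ε*δ/2)/δ = ε/2 * (δ/δ) from by ring, div_self (ne_of_gt hδ), mul_one] at hp1
    have hp2 : |whittleDisc f n f₀ θ - whittleCont f f₀ θ| ≤ (2*π*K + B)/n :=
      myriemann_full (fun x => Real.log (f θ x) + f₀ x / f θ x) K B hK hB n hnpos
        (hIlip θ hθ) (hIbd θ hθ)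
    have hK2 : (2*π*K + B)/(n:ℝ) ≤ ε/2 := by
      have hN2n : (N₂:ℝ) ≤ n := by
        exact_mod_cast le_trans (le_trans (le_max_left _ _) (le_max_right N₁ _)) hn
      rw [div_lt_iff₀ (by positivity)] at hN₂
      rw [div_le_iff₀ hn']
      nlinarith
    calc |whittleDisc f n (g n) θ - whittleCont f f₀ θ|
        ≤ |whittleDisc f n (g n) θ - whittleDisc f n f₀ θ|
          + |whittleDisc f n f₀ θ - whittleCont f f₀ θ| := abs_sub_le _ _ _
      _ ≤ ε/2 + ε/2 := by linarith
      _ = ε := by ring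
  -- convergence of the minimizers
  rw [Metric.tendsto_atTop]
  intro ε hε
  by_cases hS : (Θ \ Metric.ball θ₀ ε).Nonempty
  · have hScomp : IsCompact (Θ \ Metric.ball θ₀ ε) := by
      rw [Set.diff_eq]
      exact hΘ.inter_right Metric.isOpen_ball.isClosed_compl
    obtain ⟨θ₁, hθ₁S, hθ₁min⟩ := hScomp.exists_isMinOn hS (hcontD.mono Set.diff_subset)
    have hθ₁Θ : θ₁ ∈ Θ := hθ₁S.1
    have hθ₁ne : θ₁ ≠ θ₀ := by
      intro hEq
      apply hθ₁S.2
      rw [hEq]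
      exact Metric.mem_ball_self hε
    have hη : 0 < whittleCont f f₀ θ₁ - whittleCont f f₀ θ₀ := by
      linarith [hmin θ₁ hθ₁Θ hθ₁ne]
    obtain ⟨N, hN⟩ := hUNIF ((whittleCont f f₀ θ₁ - whittleCont f f₀ θ₀)/3) (by positivity)
    refine ⟨N, fun n hn => ?_⟩
    by_contra hcon
    push_neg at hcon
    have hmem : θhat n ∈ Θ \ Metric.ball θ₀ ε := ⟨hθhatΘ n, by
      simp only [Metric.mem_ball, not_lt]
      exact hcon⟩
    have h1 : whittleCont f f₀ θ₁ ≤ whittleCont f f₀ (θhat n) := hθ₁min hmem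
    have h2 := abs_le.1 (hN n hn (θhat n) (hθhatΘ n))
    have h3 := abs_le.1 (hN n hn θ₀ hθ₀)
    have h4 := hθhatmin n θ₀ hθ₀
    linarith [h2.1, h2.2, h3.1, h3.2]
  · refine ⟨0, fun n _ => ?_⟩
    by_contra hcon
    push_neg at hcon
    exact hS ⟨θhat n, hθhatΘ n, by
      simp only [Metric.mem_ball, not_lt]
      exact hcon⟩
end
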